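/- Let G : ℕ → ℂ satisfy G(i+2) = G(i+1) + G(i) for all i ≥ 0, let k and r be nonnegative integers, and let w ∈ ℂ with 1 − w − w² ≠ 0. With A(w; m) = (Dᵐ f)(w) for f(w) = 1/(1 − w − w²), where (D f)(w) = w·f′(w), one has ∑_{j=0}^{k} w^j · j^r · G(j) = −G(0) · ∑_{m=0}^{r} C(r, m)·(w − δ_{r,m})·A(w; m) + w·G(1) · ∑_{m=0}^{r} C(r, m)·A(w; m) − w^{k+2}·G(k) · ∑_{m=0}^{r} C(r, m)·(k+2)^m·A(w; r−m) − w^{k+1}·G(k+1) · ∑_{m=0}^{r} C(r, m)·(k+1)^m·A(w; r−m), where the convention j⁰ = 1 is used for all j including j = 0. -/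

import Mathlib

/-- The operator `D` acting on functions `f : ℂ → ℂ` by `(D f)(w) = w * f'(w)`. -/
noncomputable def Dop (f : ℂ → ℂ) : ℂ → ℂ := fun w => w * deriv f w

/-- `A w m = (Dᵐ f)(w)` where `f w = 1 / (1 - w - w²)`. -/
noncomputable def A (w : ℂ) (m : ℕ) : ℂ :=
  (Dop^[m] (fun z => 1 / (1 - z - z ^ 2))) w

namespace WSF

noncomputable def f0 : ℂ → ℂ := fun z => 1 / (1 - z - z ^ 2)

def U : Set ℂ := {z | 1 - z - z ^ 2 ≠ 0}

lemma A_eq (w : ℂ) (m : ℕ) : A w m = Dop^[m] f0 w := rfl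

lemma isOpen_U : IsOpen U := by
  have h : Continuous fun z : ℂ => 1 - z - z ^ 2 := by continuity
  exact isOpen_compl_singleton.preimage h

lemma f0_analytic : AnalyticOnNhd ℂ f0 U := by
  apply AnalyticOnNhd.div analyticOnNhd_const
  · exact (analyticOnNhd_const.sub analyticOnNhd_id).sub (analyticOnNhd_id.pow 2)
  · intro z hz; exact hz

lemma Dop_analytic {g : ℂ → ℂ} (hg : AnalyticOnNhd ℂ g U) :
    AnalyticOnNhd ℂ (Dop g) U :=
  analyticOnNhd_id.mul hg.deriv

lemma iter_analytic {g : ℂ → ℂ} (hg : AnalyticOnNhd ℂ g U) (r : ℕ) :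
    AnalyticOnNhd ℂ (Dop^[r] g) U := by
  induction r with
  | zero => exact hg
  | succ r ih => rw [Function.iterate_succ_apply']; exact Dop_analytic ih

lemma iter_diff {g : ℂ → ℂ} (hg : AnalyticOnNhd ℂ g U) (r : ℕ) {w : ℂ} (hw : w ∈ U) :
    DifferentiableAt ℂ (Dop^[r] g) w :=
  ((iter_analytic hg r) w hw).differentiableAt

lemma iter_congr {g h : ℂ → ℂ} (hgh : ∀ z ∈ U, g z = h z) (r : ℕ) :
    ∀ z ∈ U, Dop^[r] g z = Dop^[r] h z := by
  induction r with
  | zero => simpa using hgh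
  | succ r ih =>
    intro z hz
    rw [Function.iterate_succ_apply', Function.iterate_succ_apply']
    have ev : Dop^[r] g =ᶠ[nhds z] Dop^[r] h :=
      Filter.eventuallyEq_of_mem (isOpen_U.mem_nhds hz) ih
    show z * deriv (Dop^[r] g) z = z * deriv (Dop^[r] h) z
    rw [ev.deriv_eq]

lemma iter_add {g h : ℂ → ℂ} (hg : AnalyticOnNhd ℂ g U) (hh : AnalyticOnNhd ℂ h U) (r : ℕ) :
    ∀ z ∈ U, Dop^[r] (fun x => g x + h x) z = Dop^[r] g z + Dop^[r] h z := by
  induction r with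
  | zero => intro z _; rfl
  | succ r ih =>
    intro z hz
    rw [Function.iterate_succ_apply', Function.iterate_succ_apply', Function.iterate_succ_apply']
    have ev : Dop^[r] (fun x => g x + h x) =ᶠ[nhds z]
        (fun x => Dop^[r] g x + Dop^[r] h x) :=
      Filter.eventuallyEq_of_mem (isOpen_U.mem_nhds hz) ih
    show z * deriv (Dop^[r] fun x => g x + h x) z
        = z * deriv (Dop^[r] g) z + z * deriv (Dop^[r] h) z
    rw [ev.deriv_eq, deriv_fun_add (iter_diff hg r hz) (iter_diff hh r hz)]
    ring

lemma Dop_const_mul_pow (c : ℂ) (n : ℕ) :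
    Dop (fun z => c * z ^ n) = fun z => (n : ℂ) * c * z ^ n := by
  funext z
  unfold Dop
  rw [deriv_const_mul _ (differentiableAt_pow n), deriv_pow_field]
  cases n with
  | zero => simp
  | succ n => rw [Nat.add_sub_cancel, pow_succ]; ring

lemma Dop_pow (n r : ℕ) :
    Dop^[r] (fun z : ℂ => z ^ n) = fun z => (n : ℂ) ^ r * z ^ n := by
  induction r with
  | zero => funext z; simp
  | succ r ih =>
    rw [Function.iterate_succ_apply', ih, Dop_const_mul_pow]
    funext z; ring

lemma pascal_sum (x : ℕ → ℂ) (v : ℂ) (r : ℕ) :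
    ∑ m ∈ Finset.range (r + 2), (((r + 1).choose m : ℕ) : ℂ) * v ^ m * x (r + 1 - m)
      = v * (∑ m ∈ Finset.range (r + 1), ((r.choose m : ℕ) : ℂ) * v ^ m * x (r - m))
        + ∑ m ∈ Finset.range (r + 1), ((r.choose m : ℕ) : ℂ) * v ^ m * x (r - m + 1) := by
  rw [Finset.sum_range_succ' _ (r + 1)]
  have hbody : ∀ m ∈ Finset.range (r + 1),
      (((r + 1).choose (m + 1) : ℕ) : ℂ) * v ^ (m + 1) * x (r + 1 - (m + 1))
        = ((r.choose m : ℕ) : ℂ) * v ^ (m + 1) * x (r - m)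
          + ((r.choose (m + 1) : ℕ) : ℂ) * v ^ (m + 1) * x (r - m) := by
    intro m _
    rw [Nat.choose_succ_succ, Nat.succ_sub_succ]
    push_cast
    ring
  rw [Finset.sum_congr rfl hbody, Finset.sum_add_distrib, Finset.mul_sum]
  have h1 : ∑ m ∈ Finset.range (r + 1), v * (((r.choose m : ℕ) : ℂ) * v ^ m * x (r - m))
      = ∑ m ∈ Finset.range (r + 1), ((r.choose m : ℕ) : ℂ) * v ^ (m + 1) * x (r - m) :=
    Finset.sum_congr rfl fun m _ => by rw [pow_succ]; ring
  rw [h1]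
  have h2 : ∑ m ∈ Finset.range (r + 1), ((r.choose m : ℕ) : ℂ) * v ^ m * x (r - m + 1)
      = ∑ m ∈ Finset.range r, ((r.choose (m + 1) : ℕ) : ℂ) * v ^ (m + 1) * x (r - (m + 1) + 1)
        + x (r + 1) := by
    rw [Finset.sum_range_succ' _ r]; simp
  have h3 : ∑ m ∈ Finset.range (r + 1), ((r.choose (m + 1) : ℕ) : ℂ) * v ^ (m + 1) * x (r - m)
      = ∑ m ∈ Finset.range r, ((r.choose (m + 1) : ℕ) : ℂ) * v ^ (m + 1) * x (r - (m + 1) + 1) := by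
    rw [Finset.sum_range_succ, Nat.choose_succ_self]
    push_cast
    rw [zero_mul, zero_mul, add_zero]
    refine Finset.sum_congr rfl fun m hm => ?_
    have h : r - (m + 1) + 1 = r - m := by
      have := Finset.mem_range.mp hm; omega
    rw [h]
  rw [h2, h3]
  simp only [Nat.choose_zero_right, Nat.cast_one, pow_zero, Nat.sub_zero, one_mul, mul_one]
  ring

lemma keyL (n : ℕ) : ∀ (r : ℕ), ∀ w ∈ U,
    Dop^[r] (fun z => z ^ n * f0 z) w
      = w ^ n * ∑ m ∈ Finset.range (r + 1),
          ((r.choose m : ℕ) : ℂ) * (n : ℂ) ^ m * A w (r - m) := by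
  intro r
  induction r with
  | zero =>
    intro w _
    simp [A_eq]
  | succ r ih =>
    intro w hw
    rw [Function.iterate_succ_apply']
    have ev : Dop^[r] (fun z => z ^ n * f0 z) =ᶠ[nhds w]
        (fun z => z ^ n * ∑ m ∈ Finset.range (r + 1),
          ((r.choose m : ℕ) : ℂ) * (n : ℂ) ^ m * Dop^[r - m] f0 z) :=
      Filter.eventuallyEq_of_mem (isOpen_U.mem_nhds hw) (fun z hz => ih z hz)
    have hB : HasDerivAt (fun z => ∑ m ∈ Finset.range (r + 1),
          ((r.choose m : ℕ) : ℂ) * (n : ℂ) ^ m * Dop^[r - m] f0 z)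
        (∑ m ∈ Finset.range (r + 1),
          ((r.choose m : ℕ) : ℂ) * (n : ℂ) ^ m * deriv (Dop^[r - m] f0) w) w := by
      apply HasDerivAt.fun_sum
      intro m _
      have hd : HasDerivAt (Dop^[r - m] f0) (deriv (Dop^[r - m] f0) w) w :=
        (iter_diff f0_analytic (r - m) hw).hasDerivAt
      simpa [mul_assoc] using hd.const_mul (((r.choose m : ℕ) : ℂ) * (n : ℂ) ^ m)
    have hF := (hasDerivAt_pow n w).fun_mul hB
    show w * deriv (Dop^[r] (fun z => z ^ n * f0 z)) w = _
    rw [ev.deriv_eq, hF.deriv, pascal_sum (fun j => A w j) ((n : ℂ)) r]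
    simp only [A_eq]
    have hA1 : ∀ m ∈ Finset.range (r + 1),
        ((r.choose m : ℕ) : ℂ) * (n : ℂ) ^ m * Dop^[r - m + 1] f0 w
          = ((r.choose m : ℕ) : ℂ) * (n : ℂ) ^ m * (w * deriv (Dop^[r - m] f0) w) := by
      intro m _
      rw [Function.iterate_succ_apply']
      rfl
    rw [Finset.sum_congr rfl hA1]
    have hws : ∑ m ∈ Finset.range (r + 1),
        ((r.choose m : ℕ) : ℂ) * (n : ℂ) ^ m * (w * deriv (Dop^[r - m] f0) w)
          = w * ∑ m ∈ Finset.range (r + 1),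
            ((r.choose m : ℕ) : ℂ) * (n : ℂ) ^ m * deriv (Dop^[r - m] f0) w := by
      rw [Finset.mul_sum]
      exact Finset.sum_congr rfl fun m _ => by ring
    rw [hws]
    have hwp : w * ((n : ℂ) * w ^ (n - 1)) = (n : ℂ) * w ^ n := by
      cases n with
      | zero => simp
      | succ n => rw [Nat.add_sub_cancel, pow_succ]; push_cast; ring
    set S := ∑ m ∈ Finset.range (r + 1),
        ((r.choose m : ℕ) : ℂ) * (n : ℂ) ^ m * Dop^[r - m] f0 w
    set S' := ∑ m ∈ Finset.range (r + 1),
        ((r.choose m : ℕ) : ℂ) * (n : ℂ) ^ m * deriv (Dop^[r - m] f0) w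
    linear_combination S * hwp

lemma keyK (r n : ℕ) {w : ℂ} (hw : w ∈ U) :
    w ^ n * (∑ m ∈ Finset.range (r + 1),
        ((r.choose m : ℕ) : ℂ) * ((n : ℕ) : ℂ) ^ m * A w (r - m))
      - w ^ (n + 1) * (∑ m ∈ Finset.range (r + 1),
        ((r.choose m : ℕ) : ℂ) * (((n + 1 : ℕ)) : ℂ) ^ m * A w (r - m))
      - w ^ (n + 2) * (∑ m ∈ Finset.range (r + 1),
        ((r.choose m : ℕ) : ℂ) * (((n + 2 : ℕ)) : ℂ) ^ m * A w (r - m))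
      = ((n : ℕ) : ℂ) ^ r * w ^ n := by
  have h1 := keyL n r w hw
  have h2 := keyL (n + 1) r w hw
  have h3 := keyL (n + 2) r w hw
  rw [← h1, ← h2, ← h3]
  have hsplit : ∀ z ∈ U, z ^ n * f0 z
      = z ^ n + (z ^ (n + 1) * f0 z + z ^ (n + 2) * f0 z) := by
    intro z hz
    have hz' : (1 - z - z ^ 2) ≠ 0 := hz
    simp only [f0]
    field_simp
    ring
  have e1 : Dop^[r] (fun z => z ^ n * f0 z) w
      = Dop^[r] (fun z => z ^ n + (z ^ (n + 1) * f0 z + z ^ (n + 2) * f0 z)) w :=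
    iter_congr (g := fun z => z ^ n * f0 z)
      (h := fun z => z ^ n + (z ^ (n + 1) * f0 z + z ^ (n + 2) * f0 z)) hsplit r w hw
  have hpa : ∀ j : ℕ, AnalyticOnNhd ℂ (fun z : ℂ => z ^ j * f0 z) U :=
    fun j => (analyticOnNhd_id.pow j).mul f0_analytic
  have e2 : Dop^[r] (fun z => z ^ n + (z ^ (n + 1) * f0 z + z ^ (n + 2) * f0 z)) w
      = Dop^[r] (fun z : ℂ => z ^ n) w
        + Dop^[r] (fun z => z ^ (n + 1) * f0 z + z ^ (n + 2) * f0 z) w :=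
    iter_add (analyticOnNhd_id.pow n) ((hpa (n + 1)).add (hpa (n + 2))) r w hw
  have e3 : Dop^[r] (fun z => z ^ (n + 1) * f0 z + z ^ (n + 2) * f0 z) w
      = Dop^[r] (fun z => z ^ (n + 1) * f0 z) w + Dop^[r] (fun z => z ^ (n + 2) * f0 z) w :=
    iter_add (hpa (n + 1)) (hpa (n + 2)) r w hw
  have e4 : Dop^[r] (fun z : ℂ => z ^ n) w = ((n : ℕ) : ℂ) ^ r * w ^ n := by
    rw [Dop_pow]
  rw [e1, e2, e3, e4]
  ring

lemma sum_reflect (w : ℂ) (r : ℕ) :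
    ∑ m ∈ Finset.range (r + 1), ((r.choose m : ℕ) : ℂ) * A w (r - m)
      = ∑ m ∈ Finset.range (r + 1), ((r.choose m : ℕ) : ℂ) * A w m := by
  rw [← Finset.sum_range_reflect (fun m => ((r.choose m : ℕ) : ℂ) * A w m) (r + 1)]
  refine Finset.sum_congr rfl fun m hm => ?_
  have hm' : m ≤ r := by have := Finset.mem_range.mp hm; omega
  have h1 : r + 1 - 1 - m = r - m := by omega
  rw [h1, Nat.choose_symm hm']

lemma sum_zero_pow (w : ℂ) (r : ℕ) :
    ∑ m ∈ Finset.range (r + 1), ((r.choose m : ℕ) : ℂ) * (0 : ℂ) ^ m * A w (r - m)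
      = A w r := by
  rw [Finset.sum_eq_single 0]
  · simp
  · intro b _ hb
    simp [zero_pow hb]
  · intro h
    exact absurd (Finset.mem_range.mpr (by omega)) h

lemma sum_ite (w : ℂ) (r : ℕ) :
    ∑ m ∈ Finset.range (r + 1),
        ((r.choose m : ℕ) : ℂ) * (w - if r = m then 1 else 0) * A w m
      = w * (∑ m ∈ Finset.range (r + 1), ((r.choose m : ℕ) : ℂ) * A w m) - A w r := by
  have : ∀ m ∈ Finset.range (r + 1),
      ((r.choose m : ℕ) : ℂ) * (w - if r = m then 1 else 0) * A w m
        = w * (((r.choose m : ℕ) : ℂ) * A w m)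
          - (if r = m then 1 else 0) * (((r.choose m : ℕ) : ℂ) * A w m) := by
    intro m _; ring
  rw [Finset.sum_congr rfl this, Finset.sum_sub_distrib, ← Finset.mul_sum]
  congr 1
  rw [Finset.sum_eq_single r]
  · simp
  · intro b _ hb
    simp [Ne.symm hb]
  · intro h
    exact absurd (Finset.mem_range.mpr (by omega)) h

end WSF

theorem weighted_sum_formula (G : ℕ → ℂ) (hG : ∀ i, G (i + 2) = G (i + 1) + G i)
    (k r : ℕ) (w : ℂ) (hw : 1 - w - w ^ 2 ≠ 0) :
    ∑ j ∈ Finset.range (k + 1), w ^ j * (j : ℂ) ^ r * G j =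
      -G 0 * ∑ m ∈ Finset.range (r + 1),
          (r.choose m : ℂ) * (w - if r = m then 1 else 0) * A w m
      + w * G 1 * ∑ m ∈ Finset.range (r + 1), (r.choose m : ℂ) * A w m
      - w ^ (k + 2) * G k * ∑ m ∈ Finset.range (r + 1),
          (r.choose m : ℂ) * ((k : ℂ) + 2) ^ m * A w (r - m)
      - w ^ (k + 1) * G (k + 1) * ∑ m ∈ Finset.range (r + 1),
          (r.choose m : ℂ) * ((k : ℂ) + 1) ^ m * A w (r - m) := by
  have hwU : w ∈ WSF.U := hw
  induction k with
  | zero =>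
    have hK := WSF.keyK r 0 hwU
    norm_num at hK ⊢
    rw [WSF.sum_zero_pow w r, WSF.sum_reflect w r] at hK
    rw [WSF.sum_reflect w r, WSF.sum_ite w r]
    linear_combination -G 0 * hK
  | succ k ih =>
    rw [Finset.sum_range_succ, ih, hG k]
    have hK := WSF.keyK r (k + 1) hwU
    have hc2 : ((k + 1 + 2 : ℕ) : ℂ) = (k : ℂ) + 3 := by push_cast; ring
    have hc1 : ((k + 1 + 1 : ℕ) : ℂ) = (k : ℂ) + 2 := by push_cast; ring
    have hc0 : ((k + 1 : ℕ) : ℂ) = (k : ℂ) + 1 := by push_cast; ring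
    rw [hc2, hc1, hc0] at hK
    have hd2 : ((k + 1 : ℕ) : ℂ) + 2 = (k : ℂ) + 3 := by push_cast; ring
    have hd1 : ((k + 1 : ℕ) : ℂ) + 1 = (k : ℂ) + 2 := by push_cast; ring
    rw [hd2, hd1, hc0]
    linear_combination -G (k + 1) * hK
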